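/- arXiv:1810.01932 — 2 statements merged into one kernel-verified Lean document; each statement's English description precedes it below -/
import Mathlib

section
/- For the function U(t,z) = r^{1/2}cos(θ/2), there is a universal constant C such that |U_{tt}(t,z)| ≤ C r^{-1} U_t(t,z) for all (t,z) ∉ {(t,0) : t ≤ 0}, where r = √(t²+z²). Consequently, if |μ| ≤ r/2 then |U(t+μ, z) - U(t,z) - μ U_t(t,z)| ≤ C' μ² r^{-1} U_t(t,z), and hence (1 + μ/(2r) - C'μ²/r²) U(t,z) ≤ U(t+μ,z) ≤ (1 + μ/(2r) + C'μ²/r²) U(t,z). -/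
open Real

/-- The function `U(t,z) = r^{1/2} cos(θ/2)`. -/
noncomputable def U (p : ℝ × ℝ) : ℝ :=
  Real.sqrt (Real.sqrt (p.1 ^ 2 + p.2 ^ 2)) *
    Real.cos (Complex.arg (p.1 + p.2 * Complex.I) / 2)

/-- `U_t = ∂U/∂t`. -/
noncomputable def Ut (p : ℝ × ℝ) : ℝ := deriv (fun t => U (t, p.2)) p.1

/-- `U_{tt} = ∂²U/∂t²`. -/
noncomputable def Utt (p : ℝ × ℝ) : ℝ := deriv (fun t => Ut (t, p.2)) p.1

/-- The negative half-line `P⁻ = {(t,0) : t ≤ 0}`. -/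
def Pneg : Set (ℝ × ℝ) := {p | p.1 ≤ 0 ∧ p.2 = 0}

/-- `r = √(t² + z²)`. -/
noncomputable def rad (p : ℝ × ℝ) : ℝ := Real.sqrt (p.1 ^ 2 + p.2 ^ 2)

/- ### Auxiliary definitions -/

noncomputable def gg (z t : ℝ) : ℝ := Real.sqrt (t ^ 2 + z ^ 2)
noncomputable def FF (z t : ℝ) : ℝ := Real.sqrt ((gg z t + t) / 2)
noncomputable def dU (z t : ℝ) : ℝ := FF z t / (2 * gg z t)
noncomputable def ddU (z t : ℝ) : ℝ := FF z t * (gg z t - 2 * t) / (4 * gg z t ^ 3)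

lemma gg_nonneg (z t : ℝ) : 0 ≤ gg z t := Real.sqrt_nonneg _

lemma gg_sq (z t : ℝ) : gg z t ^ 2 = t ^ 2 + z ^ 2 := Real.sq_sqrt (by positivity)

lemma abs_le_gg (z t : ℝ) : |t| ≤ gg z t := by
  rw [gg, ← Real.sqrt_sq_eq_abs]
  exact Real.sqrt_le_sqrt (by nlinarith [sq_nonneg z])

lemma FF_nonneg (z t : ℝ) : 0 ≤ FF z t := Real.sqrt_nonneg _

/-- The closed form `U = √((r+t)/2)`. -/
lemma U_eq (p : ℝ × ℝ) : U p = FF p.2 p.1 := by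
  obtain ⟨t, z⟩ := p
  show Real.sqrt (Real.sqrt (t ^ 2 + z ^ 2)) *
      Real.cos (Complex.arg (t + z * Complex.I) / 2)
      = Real.sqrt ((Real.sqrt (t ^ 2 + z ^ 2) + t) / 2)
  by_cases h0 : t ^ 2 + z ^ 2 = 0
  · have ht : t = 0 := by nlinarith [sq_nonneg t, sq_nonneg z]
    have hz : z = 0 := by nlinarith [sq_nonneg t, sq_nonneg z]
    simp [ht, hz]
  · set r := Real.sqrt (t ^ 2 + z ^ 2) with hr
    have hsum : 0 ≤ t ^ 2 + z ^ 2 := by positivity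
    have hrpos : 0 < r := Real.sqrt_pos.mpr (lt_of_le_of_ne hsum (Ne.symm h0))
    have hw : (t : ℂ) + z * Complex.I ≠ 0 := by
      intro h
      have h1 : ((t : ℂ) + z * Complex.I).re = 0 := by rw [h]; simp
      have h2 : ((t : ℂ) + z * Complex.I).im = 0 := by rw [h]; simp
      simp at h1 h2
      exact h0 (by rw [h1, h2]; ring)
    have habs : ‖((t : ℂ) + z * Complex.I)‖ = r := by
      rw [Complex.norm_def, Complex.normSq_apply]
      simp only [Complex.add_re, Complex.ofReal_re, Complex.mul_re, Complex.I_re,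
        Complex.ofReal_im, Complex.I_im, Complex.add_im, Complex.mul_im]
      rw [hr]; ring_nf
    have hcos : Real.cos (Complex.arg (t + z * Complex.I)) = t / r := by
      rw [Complex.cos_arg hw, habs]; simp
    rw [Real.cos_half (Complex.neg_pi_lt_arg _).le (Complex.arg_le_pi _), hcos,
      ← Real.sqrt_mul hrpos.le]
    congr 1
    field_simp

lemma rad_eq (p : ℝ × ℝ) : rad p = gg p.2 p.1 := rfl

/- ### Derivatives -/

lemma hasDerivAt_gg {z t : ℝ} (hg : 0 < gg z t) :
    HasDerivAt (fun s => gg z s) (t / gg z t) t := by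
  have h0 : t ^ 2 + z ^ 2 ≠ 0 := by
    intro h; rw [gg, h] at hg; simp at hg
  have h1 : HasDerivAt (fun s : ℝ => s ^ 2 + z ^ 2) (2 * t) t := by
    simpa using (hasDerivAt_pow 2 t).add_const (z ^ 2)
  have h2 := (Real.hasDerivAt_sqrt h0).comp t h1
  refine h2.congr_deriv ?_
  symm
  rw [gg]
  field_simp

lemma hasDerivAt_FF {z t : ℝ} (hg : 0 < gg z t) (hh : 0 < gg z t + t) :
    HasDerivAt (fun s => FF z s) (dU z t) t := by
  have h1 : HasDerivAt (fun s => (gg z s + s) / 2) ((t / gg z t + 1) / 2) t :=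
    ((hasDerivAt_gg hg).add (hasDerivAt_id t)).div_const 2
  have hne : (gg z t + t) / 2 ≠ 0 := by positivity
  have h2 := (Real.hasDerivAt_sqrt hne).comp t h1
  refine h2.congr_deriv ?_
  symm
  rw [dU, FF]
  set s := Real.sqrt ((gg z t + t) / 2) with hsdef
  have hs : s * s = (gg z t + t) / 2 := Real.mul_self_sqrt (by positivity)
  have hsp : 0 < s := Real.sqrt_pos.mpr (by positivity)
  set g := gg z t
  field_simp
  nlinarith [hs, hsp, hg]

lemma hasDerivAt_dU {z t : ℝ} (hg : 0 < gg z t) (hh : 0 < gg z t + t) :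
    HasDerivAt (fun s => dU z s) (ddU z t) t := by
  have h1 : HasDerivAt (fun s => 2 * gg z s) (2 * (t / gg z t)) t :=
    (hasDerivAt_gg hg).const_mul 2
  have h2 := (hasDerivAt_FF hg hh).div h1 (by positivity)
  have h3 : HasDerivAt (fun s => FF z s / (2 * gg z s))
      ((dU z t * (2 * gg z t) - FF z t * (2 * (t / gg z t))) / (2 * gg z t) ^ 2) t := h2
  refine h3.congr_deriv ?_
  symm
  rw [ddU, dU]
  set f := FF z t
  set g := gg z t
  field_simp
  ring

/- ### Conditions off the slit -/

lemma not_Pneg_conds {p : ℝ × ℝ} (hp : p ∉ Pneg) :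
    0 < gg p.2 p.1 ∧ 0 < gg p.2 p.1 + p.1 := by
  obtain ⟨t, z⟩ := p
  have hp' : ¬(t ≤ 0 ∧ z = 0) := hp
  by_cases hz : z = 0
  · have ht : 0 < t := by
      by_contra h; exact hp' ⟨le_of_not_gt h, hz⟩
    have : gg z t = t := by
      rw [gg, hz]; simpa using Real.sqrt_sq ht.le
    constructor <;> simp only [this] <;> linarith
  · have hg : 0 < gg z t := Real.sqrt_pos.mpr (by positivity)
    have h2 := gg_sq z t
    have hz2 : 0 < z ^ 2 := by positivity
    constructor
    · exact hg
    · nlinarith [abs_le_gg z t, abs_nonneg t, neg_abs_le t]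

lemma Ut_eq_dU {z t : ℝ} (hg : 0 < gg z t) (hh : 0 < gg z t + t) :
    Ut (t, z) = dU z t := by
  have : (fun s => U (s, z)) = fun s => FF z s := by
    funext s; exact U_eq (s, z)
  rw [Ut, this]
  exact (hasDerivAt_FF hg hh).deriv

lemma Utt_eq_ddU {z t : ℝ} (hg : 0 < gg z t) (hh : 0 < gg z t + t) :
    Utt (t, z) = ddU z t := by
  have hcont : Continuous (fun s : ℝ => gg z s) := by
    apply Real.continuous_sqrt.comp
    continuity
  have hopen : IsOpen {s : ℝ | 0 < gg z s ∧ 0 < gg z s + s} :=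
    IsOpen.inter (isOpen_lt continuous_const hcont)
      (isOpen_lt continuous_const (hcont.add continuous_id))
  have hmem : t ∈ {s : ℝ | 0 < gg z s ∧ 0 < gg z s + s} := ⟨hg, hh⟩
  have hev : (fun s => Ut (s, z)) =ᶠ[nhds t] (fun s => dU z s) := by
    filter_upwards [hopen.mem_nhds hmem] with s hs
    exact Ut_eq_dU hs.1 hs.2
  rw [Utt, hev.deriv_eq]
  exact (hasDerivAt_dU hg hh).deriv

/- ### The pointwise second-derivative bound -/

lemma ddU_bound {z t : ℝ} (hg : 0 < gg z t) (hh : 0 < gg z t + t) :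
    |ddU z t| ≤ (3 / 2) / gg z t * dU z t := by
  set g := gg z t with hgdef
  set f := FF z t with hfdef
  have hf : 0 ≤ f := FF_nonneg z t
  have habs : |g - 2 * t| ≤ 3 * g := by
    have := abs_le_gg z t
    rw [abs_le] at *
    constructor <;> [nlinarith [this.1, this.2]; nlinarith [this.1, this.2]]
  have h1 : |ddU z t| = f * |g - 2 * t| / (4 * g ^ 3) := by
    rw [ddU, abs_div, abs_mul, abs_of_nonneg hf, abs_of_pos (by positivity : (0:ℝ) < 4 * g ^ 3)]
  rw [h1, dU, ← hgdef, ← hfdef]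
  rw [div_le_iff₀ (by positivity)]
  have : (3 / 2) / g * (f / (2 * g)) * (4 * g ^ 3) = f * (3 * g) := by
    field_simp; ring
  rw [this]
  exact mul_le_mul_of_nonneg_left habs hf

/- ### Comparability of nearby points -/

lemma nearby_bounds {z t s : ℝ} (hg : 0 < gg z t) (hh : 0 < gg z t + t)
    (hs : |s| ≤ gg z t / 2) :
    gg z t / 2 ≤ gg z (t + s) ∧ 0 < gg z (t + s) + (t + s) ∧
      gg z (t + s) + (t + s) ≤ 6 * (gg z t + t) := by
  set a := gg z t with hadef
  set b := gg z (t + s) with hbdef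
  have ha2 : a ^ 2 = t ^ 2 + z ^ 2 := gg_sq z t
  have hb2 : b ^ 2 = (t + s) ^ 2 + z ^ 2 := gg_sq z (t + s)
  have hbnn : 0 ≤ b := gg_nonneg z (t + s)
  have hta : |t| ≤ a := abs_le_gg z t
  have htsb : |t + s| ≤ b := abs_le_gg z (t + s)
  clear_value a b
  have hsabs : s ≤ |s| := le_abs_self s
  have hsabs' : -|s| ≤ s := neg_abs_le s
  have htabs : t ≤ |t| := le_abs_self t
  have htabs' : -|t| ≤ t := neg_abs_le t
  have hts : t * s ≤ |t| * |s| := by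
    calc t * s ≤ |t * s| := le_abs_self _
    _ = |t| * |s| := abs_mul t s
  -- b ≤ a + |s| and a - |s| ≤ b
  have hble : b ≤ a + |s| := by
    nlinarith [hb2, ha2, hta, abs_nonneg s, abs_nonneg t, hts, hbnn]
  have hts2 : -(|t| * |s|) ≤ t * s := by
    calc -(|t| * |s|) = -|t * s| := by rw [abs_mul]
    _ ≤ t * s := neg_abs_le _
  have halb : a - |s| ≤ b := by
    rcases le_or_gt a |s| with h | h
    · linarith
    · have hsq : (a - |s|) ^ 2 ≤ b ^ 2 := by
        nlinarith [hb2, ha2, hts2, sq_abs s, abs_nonneg s,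
          mul_le_mul_of_nonneg_right hta (abs_nonneg s)]
      have := Real.sqrt_le_sqrt hsq
      rwa [Real.sqrt_sq (by linarith), Real.sqrt_sq hbnn] at this
  have hb_half : a / 2 ≤ b := by linarith
  refine ⟨hb_half, ?_, ?_⟩
  · -- 0 < b + (t+s)
    by_cases hz : z = 0
    · have hta' : a = |t| := by rw [hadef, gg, hz]; simpa using Real.sqrt_sq_eq_abs t
      have ht : 0 < t := by
        rcases abs_cases t with h | h <;> rw [hta', h.1] at hh <;> linarith
      have hat : a = t := by rw [hta', abs_of_pos ht]
      have hts3 : 0 < t + s := by linarith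
      have : b = t + s := by
        rw [hbdef, gg, hz]
        simpa using Real.sqrt_sq hts3.le
      linarith
    · have hz2 : 0 < z ^ 2 := by positivity
      have hlt : |t + s| < b := by
        nlinarith [hb2, hz2, sq_abs (t + s), abs_nonneg (t + s), htsb]
      have := neg_abs_le (t + s)
      linarith
  · -- b + (t+s) ≤ 6 (a + t)
    rcases le_or_gt 0 t with ht | ht
    · linarith
    · rcases le_or_gt (t + s) 0 with hts0 | hts0
      · -- case 2 : (b+t+s)(b-t-s) = (a+t)(a-t), b-t-s ≥ a/2, a-t ≤ 2a
        have hprod : (b + (t + s)) * (b - (t + s)) = (a + t) * (a - t) := by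
          nlinarith [hb2, ha2]
        have h1 : a / 2 ≤ b - (t + s) := by linarith
        have h2 : a - t ≤ 2 * a := by
          have := abs_le.mp hta
          linarith [this.1]
        have h3 : 0 ≤ b + (t + s) := by
          have := abs_le.mp htsb
          linarith [this.1]
        have e1 : (b + (t + s)) * (a / 2) ≤ (b + (t + s)) * (b - (t + s)) :=
          mul_le_mul_of_nonneg_left h1 h3
        have e2 : (a + t) * (a - t) ≤ (a + t) * (2 * a) :=
          mul_le_mul_of_nonneg_left h2 hh.le
        have e3 : (b + (t + s)) * (a / 2) ≤ (a + t) * (2 * a) := by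
          rw [hprod] at e1; linarith
        have e3' : (b + (t + s)) * (a / 2) ≤ (4 * (a + t)) * (a / 2) := by
          have e5 : (4 * (a + t)) * (a / 2) = (a + t) * (2 * a) := by ring
          linarith [e3, e5.le, e5.ge]
        have e4 := le_of_mul_le_mul_right e3' (show (0:ℝ) < a / 2 by linarith)
        linarith
      · -- case 3 : t < 0 < t + s, so -t < s ≤ a/2, linear
        have h1 : -t < s := by linarith
        have h2 : -t < a / 2 := by linarith
        linarith

lemma dU_nonneg {z t : ℝ} : 0 ≤ dU z t := by
  rw [dU]
  have := FF_nonneg z t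
  have := gg_nonneg z t
  positivity

lemma dU_compare {z t s : ℝ} (hg : 0 < gg z t) (hh : 0 < gg z t + t)
    (hs : |s| ≤ gg z t / 2) :
    dU z (t + s) ≤ 5 * dU z t := by
  obtain ⟨hb_half, hq_pos, hq_le⟩ := nearby_bounds hg hh hs
  set a := gg z t with hadef
  set b := gg z (t + s) with hbdef
  have hFq : FF z (t + s) ≤ (5 / 2) * FF z t := by
    rw [FF, FF, ← hadef, ← hbdef]
    have h1 : Real.sqrt ((b + (t + s)) / 2) ≤ Real.sqrt (6 * ((a + t) / 2)) := by
      apply Real.sqrt_le_sqrt; linarith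
    have h2 : Real.sqrt (6 * ((a + t) / 2)) = Real.sqrt 6 * Real.sqrt ((a + t) / 2) :=
      Real.sqrt_mul (by norm_num) _
    have h3 : Real.sqrt 6 ≤ 5 / 2 := by
      rw [show (5 / 2 : ℝ) = Real.sqrt ((5 / 2) ^ 2) from (Real.sqrt_sq (by norm_num)).symm]
      apply Real.sqrt_le_sqrt; norm_num
    calc Real.sqrt ((b + (t + s)) / 2) ≤ Real.sqrt 6 * Real.sqrt ((a + t) / 2) := by
          rw [← h2]; exact h1
      _ ≤ (5 / 2) * Real.sqrt ((a + t) / 2) :=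
          mul_le_mul_of_nonneg_right h3 (Real.sqrt_nonneg _)
  have hbpos : 0 < b := lt_of_lt_of_le (by positivity) hb_half
  rw [dU, dU, ← hadef, ← hbdef]
  calc FF z (t + s) / (2 * b) ≤ (5 / 2) * FF z t / (2 * (a / 2)) := by
        refine div_le_div₀ (mul_nonneg (by norm_num) (FF_nonneg z t)) hFq ?_ ?_
        · linarith
        · linarith
    _ = 5 * (FF z t / (2 * a)) := by field_simp <;> ring

/- ### Main theorem -/

/-- `|U_{tt}| ≤ C r⁻¹ U_t` off `P⁻`; consequently, Taylor expansion in `t` gives the two-sided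
estimate `(1 + μ/(2r) ∓ C'μ²/r²) U ≤/≥ U(t+μ,z)` for `|μ| ≤ r/2`. -/
theorem stmt15 :
    ∃ C : ℝ, 0 < C ∧ (∀ p : ℝ × ℝ, p ∉ Pneg → |Utt p| ≤ C / rad p * Ut p) ∧
    ∃ C' : ℝ, 0 < C' ∧ ∀ p : ℝ × ℝ, p ∉ Pneg → ∀ μ : ℝ, |μ| ≤ rad p / 2 →
      |U (p.1 + μ, p.2) - U p - μ * Ut p| ≤ C' * μ ^ 2 / rad p * Ut p ∧
      (1 + μ / (2 * rad p) - C' * μ ^ 2 / (rad p) ^ 2) * U p ≤ U (p.1 + μ, p.2) ∧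
      U (p.1 + μ, p.2) ≤ (1 + μ / (2 * rad p) + C' * μ ^ 2 / (rad p) ^ 2) * U p := by
  refine ⟨3 / 2, by norm_num, ?_, 15, by norm_num, ?_⟩
  · rintro ⟨t, z⟩ hp
    obtain ⟨hg, hh⟩ := not_Pneg_conds hp
    rw [rad_eq, Ut_eq_dU hg hh, Utt_eq_ddU hg hh]
    exact ddU_bound hg hh
  · rintro ⟨t, z⟩ hp μ hμ
    obtain ⟨hg, hh⟩ := not_Pneg_conds hp
    simp only at hg hh
    rw [rad_eq] at hμ ⊢
    simp only at hμ ⊢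
    set a := gg z t with hadef
    have hUt : Ut (t, z) = dU z t := Ut_eq_dU hg hh
    have hU : U (t, z) = FF z t := U_eq (t, z)
    have hU' : U (t + μ, z) = FF z (t + μ) := U_eq (t + μ, z)
    -- conditions on the interval
    set S := Set.Icc (t - a / 2) (t + a / 2) with hSdef
    have hcond : ∀ x ∈ S, 0 < gg z x ∧ 0 < gg z x + x ∧ a / 2 ≤ gg z x ∧
        dU z x ≤ 5 * dU z t := by
      intro x hx
      have hxs : |x - t| ≤ a / 2 := by
        rw [abs_le]; constructor <;> [linarith [hx.1]; linarith [hx.2]]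
      obtain ⟨h1, h2, h3⟩ := nearby_bounds hg hh hxs
      have hx' : t + (x - t) = x := by ring
      rw [hx'] at h1 h2
      refine ⟨lt_of_lt_of_le (by positivity) h1, h2, h1, ?_⟩
      have := dU_compare hg hh hxs
      rwa [hx'] at this
    set K := 15 * dU z t / a with hKdef
    have hdUnn : 0 ≤ dU z t := dU_nonneg
    have hKnn : 0 ≤ K := by rw [hKdef]; positivity
    -- bound on |ddU| on S
    have hbound : ∀ x ∈ S, ‖ddU z x‖ ≤ K := by
      intro x hx
      obtain ⟨h1, h2, h3, h4⟩ := hcond x hx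
      calc ‖ddU z x‖ = |ddU z x| := rfl
        _ ≤ (3 / 2) / gg z x * dU z x := ddU_bound h1 h2
        _ ≤ (3 / 2) / (a / 2) * (5 * dU z t) := by
            apply mul_le_mul _ h4 dU_nonneg (by positivity)
            apply div_le_div_of_nonneg_left (by norm_num) (by positivity) h3
        _ = K := by rw [hKdef]; field_simp; ring
    -- first MVT : dU is K-Lipschitz on S
    have hderiv : ∀ x ∈ S, HasDerivWithinAt (fun s => dU z s) (ddU z x) S x := by
      intro x hx
      exact (hasDerivAt_dU (hcond x hx).1 (hcond x hx).2.1).hasDerivWithinAt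
    have hlip : ∀ x ∈ S, ∀ y ∈ S, ‖dU z y - dU z x‖ ≤ K * ‖y - x‖ := fun x hx y hy =>
      (convex_Icc _ _).norm_image_sub_le_of_norm_hasDerivWithin_le hderiv hbound hx hy
    -- second MVT on the smaller interval
    have habs := abs_le.mp hμ
    have hS2sub : Set.uIcc t (t + μ) ⊆ S := by
      rw [hSdef]
      apply Set.uIcc_subset_Icc
      · constructor <;> linarith [habs.1, habs.2, abs_nonneg μ]
      · constructor <;> linarith [habs.1, habs.2]
    have htS : t ∈ S := by
      rw [hSdef]; constructor <;> simp <;> positivity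
    have hφderiv : ∀ x ∈ Set.uIcc t (t + μ), HasDerivWithinAt
        (fun s => FF z s - s * dU z t) (dU z x - dU z t) (Set.uIcc t (t + μ)) x := by
      intro x hx
      have h1 := (hasDerivAt_FF (hcond x (hS2sub hx)).1 (hcond x (hS2sub hx)).2.1)
      exact (h1.sub ((hasDerivAt_id x).mul_const (dU z t))).hasDerivWithinAt.congr_deriv
        (by ring)
    have hφbound : ∀ x ∈ Set.uIcc t (t + μ), ‖dU z x - dU z t‖ ≤ K * |μ| := by
      intro x hx
      have h1 := hlip t htS x (hS2sub hx)
      have h2 : ‖x - t‖ ≤ |μ| := by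
        rw [Real.norm_eq_abs, abs_le]
        rcases Set.mem_uIcc.mp hx with ⟨h3, h4⟩ | ⟨h3, h4⟩
        · constructor <;> linarith [neg_abs_le μ, le_abs_self μ, abs_nonneg μ]
        · constructor <;> linarith [neg_abs_le μ, le_abs_self μ, abs_nonneg μ]
      calc ‖dU z x - dU z t‖ ≤ K * ‖x - t‖ := h1
        _ ≤ K * |μ| := mul_le_mul_of_nonneg_left h2 hKnn
    have hMVT := (convex_uIcc t (t + μ)).norm_image_sub_le_of_norm_hasDerivWithin_le
      hφderiv hφbound (Set.left_mem_uIcc) (Set.right_mem_uIcc)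
    -- hMVT : ‖(FF z (t+μ) - (t+μ) dU) - (FF z t - t dU)‖ ≤ K |μ| ‖(t+μ) - t‖
    have hkey : |U (t + μ, z) - U (t, z) - μ * Ut (t, z)| ≤ 15 * μ ^ 2 / a * dU z t := by
      have h1 : U (t + μ, z) - U (t, z) - μ * Ut (t, z) =
          (FF z (t + μ) - (t + μ) * dU z t) - (FF z t - t * dU z t) := by
        rw [hU, hU', hUt]; ring
      rw [h1, ← Real.norm_eq_abs]
      calc ‖(FF z (t + μ) - (t + μ) * dU z t) - (FF z t - t * dU z t)‖
          ≤ K * |μ| * ‖(t + μ) - t‖ := hMVT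
        _ = 15 * μ ^ 2 / a * dU z t := by
            rw [hKdef]
            simp only [add_sub_cancel_left, Real.norm_eq_abs]
            rw [mul_assoc, abs_mul_abs_self]
            ring
    rw [← hUt] at hkey
    have hUtval : Ut (t, z) = FF z t / (2 * a) := by rw [hUt, dU]
    have hFnn : 0 ≤ FF z t := FF_nonneg z t
    have h2 := abs_le.mp hkey
    have h3 : 15 * μ ^ 2 / a * (FF z t / (2 * a)) ≤ 15 * μ ^ 2 / a ^ 2 * FF z t := by
      have ha' : a ≠ 0 := ne_of_gt hg
      have e : 15 * μ ^ 2 / a * (FF z t / (2 * a)) = 15 * μ ^ 2 / a ^ 2 * FF z t / 2 := by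
        rw [div_mul_div_comm, div_mul_eq_mul_div, div_div]
        congr 1
        ring
      have e2 : 0 ≤ 15 * μ ^ 2 / a ^ 2 * FF z t :=
        mul_nonneg (by positivity) hFnn
      linarith [e.le, e.ge]
    rw [hU, hU', hUtval] at h2 ⊢
    have hμUt : μ * (FF z t / (2 * a)) = μ / (2 * a) * FF z t := by ring
    refine ⟨?_, ?_, ?_⟩
    · rw [← hUtval, ← hU, ← hU']; exact hkey
    · nlinarith [h2.1, h2.2, h3, hFnn, hg, hμUt]
    · nlinarith [h2.1, h2.2, h3, hFnn, hg, hμUt]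
end

section
/- Let α = 1 + (ε/2) b for |b| bounded and ε small. Then for U(t,z) = r^{1/2}cos(θ/2), one has α U(t,z) = U(t + ε b r + O(ε²), z), where r² = t² + z²; more precisely there is a constant C (depending on the bound for b) such that U(t + εbr - Cε²r, z) ≤ α U(t,z) ≤ U(t + εbr + Cε²r, z) whenever ε is sufficiently small. -/
open Real

/-- Closed form: `U(t,z) = √((r+t)/2)`. -/
lemma U_eq_s16 (t z : ℝ) : U (t, z) = Real.sqrt ((Real.sqrt (t ^ 2 + z ^ 2) + t) / 2) := by
  by_cases h : t = 0 ∧ z = 0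
  · obtain ⟨rfl, rfl⟩ := h; simp [U]
  · have hw : (t : ℂ) + z * Complex.I ≠ 0 := by
      intro h0
      exact h ⟨by simpa using congrArg Complex.re h0, by simpa using congrArg Complex.im h0⟩
    have hpos : 0 < t ^ 2 + z ^ 2 := by
      rcases not_and_or.mp h with h' | h'
      · positivity
      · positivity
    have hr : 0 < Real.sqrt (t ^ 2 + z ^ 2) := Real.sqrt_pos.mpr hpos
    have hre : ((t : ℂ) + z * Complex.I).re = t := by simp
    have hcos : Real.cos (Complex.arg ((t : ℂ) + z * Complex.I) / 2)
        = Real.sqrt ((1 + t / Real.sqrt (t ^ 2 + z ^ 2)) / 2) := by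
      rw [Real.cos_half (Complex.neg_pi_lt_arg _).le (Complex.arg_le_pi _),
        Complex.cos_arg hw, hre, Complex.norm_add_mul_I]
    show Real.sqrt (Real.sqrt (t ^ 2 + z ^ 2)) * _ = _
    rw [hcos, ← Real.sqrt_mul hr.le]
    congr 1
    field_simp

set_option maxHeartbeats 1600000 in
/-- For `α = 1 + (ε/2) b` with `|b| ≤ M` and `ε` sufficiently small,
`U(t + εbr - Cε²r, z) ≤ α U(t,z) ≤ U(t + εbr + Cε²r, z)`, i.e.
`α U(t,z) = U(t + εbr + O(ε²), z)`. -/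
theorem stmt16 (M : ℝ) (hM : 0 < M) :
    ∃ C : ℝ, 0 < C ∧ ∃ ε₀ : ℝ, 0 < ε₀ ∧
      ∀ b ε : ℝ, |b| ≤ M → 0 < ε → ε < ε₀ →
        ∀ p : ℝ × ℝ, p ∉ Pneg →
          U (p.1 + ε * b * rad p - C * ε ^ 2 * rad p, p.2) ≤ (1 + ε / 2 * b) * U p ∧
          (1 + ε / 2 * b) * U p ≤ U (p.1 + ε * b * rad p + C * ε ^ 2 * rad p, p.2) := by
  refine ⟨M ^ 2, by positivity, 1 / (10 * (M + 1) ^ 3), by positivity, ?_⟩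
  intro b ε hb hε hεlt p hp
  obtain ⟨t, z⟩ := p
  simp only [Pneg, Set.mem_setOf_eq, not_and_or, not_le] at hp
  have hpos : 0 < t ^ 2 + z ^ 2 := by rcases hp with h | h <;> positivity
  have hr : 0 < Real.sqrt (t ^ 2 + z ^ 2) := Real.sqrt_pos.mpr hpos
  set r := Real.sqrt (t ^ 2 + z ^ 2) with hrdef
  clear_value r
  have hr2 : r ^ 2 = t ^ 2 + z ^ 2 := by rw [hrdef]; exact Real.sq_sqrt hpos.le
  have ht1 : |t| ≤ r := by
    rw [hrdef, ← Real.sqrt_sq_eq_abs]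
    exact Real.sqrt_le_sqrt (by nlinarith [sq_nonneg z])
  obtain ⟨ht2, ht3⟩ := abs_le.mp ht1
  have hrt : 0 ≤ r + t := by linarith
  obtain ⟨hb1, hb2⟩ := abs_le.mp hb
  have hrad : rad (t, z) = r := by rw [hrdef]; rfl
  -- numeric smallness facts
  have hM3 : M ≤ (M + 1) ^ 3 := by nlinarith [sq_nonneg M, hM.le]
  have hεM : ε * M ≤ 1 / 10 := by
    have h1 : ε * M ≤ (1 / (10 * (M + 1) ^ 3)) * M :=
      mul_le_mul_of_nonneg_right hεlt.le hM.le
    have h2 : (0:ℝ) < (M + 1) ^ 3 := by positivity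
    calc ε * M ≤ (1 / (10 * (M + 1) ^ 3)) * M := h1
      _ ≤ 1 / 10 := by
          rw [div_mul_eq_mul_div, one_mul, div_le_div_iff₀ (by positivity) (by norm_num)]
          nlinarith
  have hεb1 : -(1/10) ≤ ε * b := by nlinarith
  have hεb2 : ε * b ≤ 1/10 := by nlinarith
  have hbsq : b ^ 2 ≤ M ^ 2 := by nlinarith
  have hCe : M ^ 2 * ε ^ 2 ≤ 1 / 100 := by
    have h := mul_le_mul hεM hεM (mul_nonneg hε.le hM.le) (by norm_num : (0:ℝ) ≤ 1/10)
    nlinarith [h]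
  have hεM3 : ε * M ^ 3 ≤ M ^ 2 / 10 := by
    nlinarith [mul_le_mul_of_nonneg_right hεM (sq_nonneg M)]
  have hεb3u : ε * b ^ 3 ≤ M ^ 2 / 10 := by
    have hbc : b ^ 3 ≤ M ^ 3 := by nlinarith [sq_nonneg (M + b), sq_nonneg (M - b), sq_nonneg b]
    nlinarith [mul_le_mul_of_nonneg_left hbc hε.le]
  have hεb3l : -(M ^ 2 / 10) ≤ ε * b ^ 3 := by
    have hbc : -(M ^ 3) ≤ b ^ 3 := by nlinarith [sq_nonneg (M + b), sq_nonneg (M - b), sq_nonneg b]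
    nlinarith [mul_le_mul_of_nonneg_left hbc hε.le]
  have hα : 0 ≤ 1 + ε / 2 * b := by nlinarith
  -- rewrite U via closed form
  rw [U_eq_s16, U_eq_s16, U_eq_s16, hrad, ← hrdef]
  have halpha : ∀ x : ℝ, 0 ≤ x →
      (1 + ε / 2 * b) * Real.sqrt x = Real.sqrt ((1 + ε / 2 * b) ^ 2 * x) := by
    intro x hx
    rw [Real.sqrt_mul (sq_nonneg _), Real.sqrt_sq hα]
  constructor
  · -- upper bound: U(t + εbr - Cε²r, z) ≤ α U(t,z)
    obtain ⟨dm, hdm⟩ : ∃ dm : ℝ, dm = ε * b - M ^ 2 * ε ^ 2 := ⟨_, rfl⟩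
    have hq : t + ε * b * r - M ^ 2 * ε ^ 2 * r = t + dm * r := by rw [hdm]; ring
    rw [hq]
    obtain ⟨Y, hY⟩ : ∃ Y : ℝ, Y = (1 + ε / 2 * b) ^ 2 * (r + t) - (t + dm * r) := ⟨_, rfl⟩
    have hprod1 : 0 ≤ (r + t) * (1/10 + ε * b) := mul_nonneg hrt (by linarith)
    have hprod2 : 0 ≤ (r - t) * (1/10 - ε * b) := mul_nonneg (by linarith) (by linarith)
    have hY0 : 0 ≤ Y := by
      rw [hY, hdm]
      nlinarith [mul_nonneg hrt (mul_nonneg (sq_nonneg ε) (sq_nonneg b)),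
        mul_nonneg (mul_nonneg (sq_nonneg M) (sq_nonneg ε)) hr.le]
    have hbracket : 0 ≤ 2 * M ^ 2 * r + 2 * M ^ 2 * (ε * b) * r + ε * b ^ 3 * t / 2
        - b ^ 2 * (r / 2 - t) := by
      nlinarith [mul_nonneg (mul_nonneg (by positivity : (0:ℝ) ≤ 2 * M ^ 2) hr.le)
          (by linarith : 0 ≤ ε * b + 1/10),
        mul_nonneg (by linarith : 0 ≤ M ^ 2 / 10 + ε * b ^ 3) hrt,
        mul_nonneg (by linarith : 0 ≤ M ^ 2 / 10 - ε * b ^ 3) (by linarith : 0 ≤ r - t),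
        mul_nonneg (by nlinarith : (0:ℝ) ≤ M ^ 2 - b ^ 2) hrt,
        mul_nonneg (by nlinarith : (0:ℝ) ≤ M ^ 2 - b ^ 2) hr.le]
    have hkey : 0 ≤ (r + t) * (2 * M ^ 2 * r + 2 * M ^ 2 * (ε * b) * r + ε * b ^ 3 * t / 2
        - b ^ 2 * (r / 2 - t)) := mul_nonneg hrt hbracket
    have hYsq : (t + dm * r) ^ 2 + z ^ 2 ≤ Y ^ 2 := by
      rw [hY, hdm]
      nlinarith [mul_nonneg (sq_nonneg ε) hkey,
        sq_nonneg (ε ^ 2 * b ^ 2 * (r + t) / 4),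
        mul_nonneg (mul_nonneg (sq_nonneg (ε ^ 2 * M * b)) hr.le) hrt, hr2]
    have h5 : Real.sqrt ((t + dm * r) ^ 2 + z ^ 2) ≤ Y :=
      (Real.sqrt_le_sqrt hYsq).trans_eq (Real.sqrt_sq hY0)
    rw [halpha _ (by positivity)]
    apply Real.sqrt_le_sqrt
    have : Real.sqrt ((t + dm * r) ^ 2 + z ^ 2) + (t + dm * r)
        ≤ (1 + ε / 2 * b) ^ 2 * (r + t) := by
      have := hY
      linarith [h5]
    linarith
  · -- lower bound: α U(t,z) ≤ U(t + εbr + Cε²r, z)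
    obtain ⟨dp, hdp⟩ : ∃ dp : ℝ, dp = ε * b + M ^ 2 * ε ^ 2 := ⟨_, rfl⟩
    have hq : t + ε * b * r + M ^ 2 * ε ^ 2 * r = t + dp * r := by rw [hdp]; ring
    rw [hq]
    have hdp1 : -(1/5) ≤ dp := by rw [hdp]; nlinarith [sq_nonneg (M * ε)]
    have hdp2 : dp ≤ 1/5 := by rw [hdp]; nlinarith [sq_nonneg (M * ε)]
    have h1 : (r + t * dp) ^ 2 ≤ (t + dp * r) ^ 2 + z ^ 2 := by
      nlinarith [mul_nonneg (sq_nonneg dp) (sq_nonneg z), hr2]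
    have h2 : 0 ≤ r + t * dp := by
      nlinarith [mul_nonneg hrt (by linarith : 0 ≤ 1/5 + dp),
        mul_nonneg (by linarith : 0 ≤ r - t) (by linarith : 0 ≤ 1/5 - dp)]
    have h3 : r + t * dp ≤ Real.sqrt ((t + dp * r) ^ 2 + z ^ 2) :=
      (Real.sqrt_sq h2).symm.trans_le (Real.sqrt_le_sqrt h1)
    rw [halpha _ (by positivity)]
    apply Real.sqrt_le_sqrt
    have h4 : (1 + ε / 2 * b) ^ 2 * (r + t) ≤ (r + t * dp) + (t + dp * r) := by
      rw [hdp]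
      nlinarith [mul_nonneg hrt (mul_nonneg (sq_nonneg ε)
        (by nlinarith : (0:ℝ) ≤ M ^ 2 - b ^ 2)), mul_nonneg hrt (sq_nonneg (ε * b))]
    linarith
end
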